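/- arXiv:2305.11110 — 4 statements merged into one kernel-verified Lean document; each statement's English description precedes it below -/
import Mathlib

section
/- Let P be the uniform probability measure on the segment {(x,0) : 0 ≤ x ≤ 2} ⊂ ℝ², and let the constraint be the segment of the line y = 1 between (1/2, 1) and (3/2, 1). Then {(1,1)} is an optimal set of one point, {(1/2,1),(3/2,1)} is an optimal set of two points, and for every n ≥ 3 the set α_n = {(a_i, 1) : 1 ≤ i ≤ n} with a_1 = 1/2, a_i = 1/2 + (i−1)/(n−1) for 2 ≤ i ≤ n−1, and a_n = 3/2, is an optimal set of n points, with nth constrained quantization error V_n = (25n² − 50n + 26)/(24(n−1)²). -/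
open MeasureTheory Real Set

noncomputable section

abbrev E2 : Type := EuclideanSpace ℝ (Fin 2)

/-- The point `(x, y)` of the Euclidean plane. -/
def cpt (x y : ℝ) : E2 := WithLp.toLp 2 ![x, y]

/-- Distortion error of `P` with respect to the set `α`: `∫ min_{a ∈ α} ‖x - a‖² dP(x)`. -/
def cDistortion (P : Measure E2) (α : Set E2) : ℝ :=
  ∫ x, (⨅ a : α, dist x (a : E2) ^ 2) ∂P

/-- The `n`th constrained quantization error of `P` with constraint set `S`. -/
def cqError (P : Measure E2) (S : Set E2) (n : ℕ) : ℝ :=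
  sInf {v : ℝ | ∃ α : Set E2, α ⊆ S ∧ α.Finite ∧ 1 ≤ α.ncard ∧ α.ncard ≤ n ∧
    v = cDistortion P α}

/-- `α` is an optimal set of `n` points for `P` with constraint `S`: it is an admissible set
attaining the `n`th constrained quantization error. -/
def IsOptimalNSet (P : Measure E2) (S : Set E2) (n : ℕ) (α : Set E2) : Prop :=
  α ⊆ S ∧ α.Finite ∧ 1 ≤ α.ncard ∧ α.ncard ≤ n ∧ cDistortion P α = cqError P S n

/-- The uniform probability distribution on the interval `[a, b]`. -/
def uniformIccM (a b : ℝ) : Measure ℝ :=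
  (ENNReal.ofReal (b - a))⁻¹ • volume.restrict (Icc a b)

/-- The point of the line `y = m x + c` with abscissa `t`. -/
def segPt (m c t : ℝ) : E2 := cpt t (m * t + c)

section Aux

lemma cpt_inj : Function.Injective (fun t : ℝ => cpt t 1) := by
  intro a b h
  have := congrArg (fun v : E2 => v 0) h
  simpa [cpt] using this

lemma dist_cpt_sq (x t : ℝ) : dist (cpt x 0) (cpt t 1) ^ 2 = (x - t) ^ 2 + 1 := by
  rw [EuclideanSpace.dist_eq]
  rw [Real.sq_sqrt (by positivity)]
  simp [cpt, Fin.sum_univ_two, Real.dist_eq, sq_abs]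

lemma segment_eq : segment ℝ (cpt (1/2) 1) (cpt (3/2) 1) = (fun t : ℝ => cpt t 1) '' Icc (1/2) (3/2) := by
  rw [segment_eq_image]
  have h : (fun θ : ℝ => (1 - θ) • cpt (1/2) 1 + θ • cpt (3/2) 1)
      = (fun t : ℝ => cpt t 1) ∘ (fun θ : ℝ => 1/2 + θ) := by
    funext θ
    ext i
    fin_cases i <;> simp [cpt] <;> ring
  rw [h, Set.image_comp]
  rw [Set.image_const_add_Icc]
  norm_num


lemma continuous_inf' {X : Type*} [TopologicalSpace X] (T : Finset ℝ) (h : T.Nonempty)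
    {g : ℝ → X → ℝ} (hg : ∀ t, Continuous (g t)) :
    Continuous (fun y => T.inf' h (fun t => g t y)) := by
  induction h using Finset.Nonempty.cons_induction with
  | singleton a =>
      have hrw : (fun y => Finset.inf' {a} (Finset.singleton_nonempty a) (fun t => g t y)) = g a := by
        funext y; simp
      rw [hrw]; exact hg a
  | cons a s ha hs ih =>
      have hrw : (fun y => (Finset.cons a s ha).inf' (Finset.cons_nonempty ha) (fun t => g t y))
          = fun y => (g a y) ⊓ (s.inf' hs (fun t => g t y)) := by
        funext y; exact Finset.inf'_cons (H := hs) (f := fun t => g t y)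
      rw [hrw]
      exact (hg a).min ih

set_option maxHeartbeats 1000000 in
lemma iInf_dist_eq (T : Finset ℝ) (h : T.Nonempty) (y : E2) :
    (⨅ a : ((fun t : ℝ => cpt t 1) '' (T : Set ℝ)), dist y (a : E2) ^ 2)
      = T.inf' h (fun t => dist y (cpt t 1) ^ 2) := by
  apply le_antisymm
  · obtain ⟨t0, ht0, hEq⟩ := T.exists_mem_eq_inf' h (fun t => dist y (cpt t 1) ^ 2)
    rw [hEq]
    have hb : BddBelow (Set.range fun a : ((fun t : ℝ => cpt t 1) '' (T : Set ℝ)) => dist y (a : E2) ^ 2) := by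
      refine ⟨0, ?_⟩
      rintro v ⟨a, rfl⟩
      positivity
    exact ciInf_le (f := fun a : ((fun t : ℝ => cpt t 1) '' (T : Set ℝ)) => dist y (a : E2) ^ 2) hb
      ⟨cpt t0 1, ⟨t0, ht0, rfl⟩⟩
  · haveI : Nonempty ((fun t : ℝ => cpt t 1) '' (T : Set ℝ)) :=
      ⟨⟨cpt h.choose 1, ⟨h.choose, h.choose_spec, rfl⟩⟩⟩
    apply le_ciInf
    rintro ⟨a, t, ht, rfl⟩
    exact Finset.inf'_le _ ht

lemma integral_map_uniform (g : E2 → ℝ) (hg : Continuous g) :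
    ∫ y, g y ∂(Measure.map (fun x : ℝ => cpt x 0) (uniformIccM 0 2))
      = (1/2) * ∫ x in (0:ℝ)..2, g (cpt x 0) := by
  have hm : Measurable (fun x : ℝ => cpt x 0) := by
    unfold cpt; fun_prop
  rw [integral_map hm.aemeasurable hg.aestronglyMeasurable]
  unfold uniformIccM
  rw [integral_smul_measure]
  rw [intervalIntegral.integral_of_le (by norm_num), ← integral_Icc_eq_integral_Ioc]
  rw [smul_eq_mul]
  norm_num [ENNReal.toReal_inv]

lemma integral_sq_shift (a b c : ℝ) :
    ∫ x in a..b, (x - c) ^ 2 = ((b - c) ^ 3 - (a - c) ^ 3) / 3 := by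
  have hder : ∀ x : ℝ, HasDerivAt (fun y : ℝ => (y - c) ^ 3 / 3) ((x - c) ^ 2) x := by
    intro x
    have h1 : HasDerivAt (fun y : ℝ => y - c) 1 x := (hasDerivAt_id x).sub_const c
    have h2 := (h1.fun_pow 3).div_const 3
    exact h2.congr_deriv (by norm_num)
  have hci : Continuous fun x : ℝ => (x - c) ^ 2 := by continuity
  rw [intervalIntegral.integral_eq_sub_of_hasDerivAt (fun x _ => hder x)
    (hci.intervalIntegrable (μ := volume) a b)]
  ring

lemma integral_min_sq (a b : ℝ) (hab : a ≤ b) :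
    ∫ x in a..b, min ((x - a) ^ 2) ((x - b) ^ 2) = (b - a) ^ 3 / 12 := by
  set m := (a + b) / 2 with hm
  have hm1 : a ≤ m := by simp [hm]; linarith
  have hm2 : m ≤ b := by simp [hm]; linarith
  have hcont : Continuous (fun x : ℝ => min ((x - a) ^ 2) ((x - b) ^ 2)) := by
    apply Continuous.min <;> exact (continuous_id.sub continuous_const).pow 2
  have hsplit := intervalIntegral.integral_add_adjacent_intervals
    (f := fun x : ℝ => min ((x - a) ^ 2) ((x - b) ^ 2)) (a := a) (b := m) (c := b)
    (hcont.intervalIntegrable (μ := volume) _ _) (hcont.intervalIntegrable (μ := volume) _ _)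
  rw [← hsplit]
  have e1 : ∫ x in a..m, min ((x - a) ^ 2) ((x - b) ^ 2) = ∫ x in a..m, (x - a) ^ 2 := by
    apply intervalIntegral.integral_congr
    intro x hx
    rw [Set.uIcc_of_le hm1] at hx
    have hx1 := hx.1; have hx2 := hx.2
    have : (x - a) ^ 2 ≤ (x - b) ^ 2 := by nlinarith
    simp [min_eq_left this]
  have e2 : ∫ x in m..b, min ((x - a) ^ 2) ((x - b) ^ 2) = ∫ x in m..b, (x - b) ^ 2 := by
    apply intervalIntegral.integral_congr
    intro x hx
    rw [Set.uIcc_of_le hm2] at hx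
    have hx1 := hx.1; have hx2 := hx.2
    have : (x - b) ^ 2 ≤ (x - a) ^ 2 := by nlinarith
    simp [min_eq_right this]
  rw [e1, e2, integral_sq_shift, integral_sq_shift, hm]
  ring

lemma key_integral (k : ℕ) (t : ℕ → ℝ) (hmono : ∀ i, i < k → t i ≤ t (i + 1))
    (h0 : 0 ≤ t 0) (h2 : t k ≤ 2) (hT : ((Finset.range (k+1)).image t).Nonempty) :
    ∫ x in (0:ℝ)..2, ((Finset.range (k+1)).image t).inf' hT (fun s => (x - s) ^ 2)
      = (t 0) ^ 3 / 3 + (2 - t k) ^ 3 / 3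
        + ∑ i ∈ Finset.range k, (t (i + 1) - t i) ^ 3 / 12 := by
  set T := (Finset.range (k+1)).image t with hTdef
  set F := fun x : ℝ => T.inf' hT (fun s => (x - s) ^ 2) with hF
  have hmono' : ∀ i j, i ≤ j → j ≤ k → t i ≤ t j := by
    intro i j hij hjk
    induction j with
    | zero => exact le_of_eq (congrArg t (Nat.le_zero.mp hij))
    | succ m ih =>
        rcases Nat.eq_or_lt_of_le hij with h | h
        · rw [h]
        · exact le_trans (ih (by omega) (by omega)) (hmono m (by omega))
  have ht_mem : ∀ i, i ≤ k → t i ∈ T := by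
    intro i hi
    exact Finset.mem_image.mpr ⟨i, Finset.mem_range.mpr (by omega), rfl⟩
  have hmemT : ∀ s ∈ T, ∃ j, j ≤ k ∧ s = t j := by
    intro s hs
    obtain ⟨j, hj, rfl⟩ := Finset.mem_image.mp hs
    exact ⟨j, Nat.lt_succ_iff.mp (Finset.mem_range.mp hj), rfl⟩
  have pw_left : ∀ x : ℝ, x ≤ t 0 → F x = (x - t 0) ^ 2 := by
    intro x hx
    refine le_antisymm (Finset.inf'_le _ (ht_mem 0 (Nat.zero_le k))) ?_
    apply Finset.le_inf'
    intro s hs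
    obtain ⟨j, hj, rfl⟩ := hmemT s hs
    have h1 : t 0 ≤ t j := hmono' 0 j (Nat.zero_le j) hj
    nlinarith
  have pw_right : ∀ x : ℝ, t k ≤ x → F x = (x - t k) ^ 2 := by
    intro x hx
    refine le_antisymm (Finset.inf'_le _ (ht_mem k le_rfl)) ?_
    apply Finset.le_inf'
    intro s hs
    obtain ⟨j, hj, rfl⟩ := hmemT s hs
    have h1 : t j ≤ t k := hmono' j k hj le_rfl
    nlinarith
  have pw_mid : ∀ i, i < k → ∀ x : ℝ, t i ≤ x → x ≤ t (i+1) →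
      F x = min ((x - t i) ^ 2) ((x - t (i+1)) ^ 2) := by
    intro i hi x hx1 hx2
    refine le_antisymm (le_min (Finset.inf'_le _ (ht_mem i (by omega)))
      (Finset.inf'_le _ (ht_mem (i+1) (by omega)))) ?_
    apply Finset.le_inf'
    intro s hs
    obtain ⟨j, hj, rfl⟩ := hmemT s hs
    rcases le_or_gt j i with h | h
    · have h1 : t j ≤ t i := hmono' j i h (by omega)
      exact le_trans (min_le_left _ _) (by nlinarith)
    · have h1 : t (i+1) ≤ t j := hmono' (i+1) j h hj
      exact le_trans (min_le_right _ _) (by nlinarith)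
  have hFc : Continuous F := continuous_inf' T hT (g := fun s x => (x - s) ^ 2)
    (fun s => by continuity)
  have hFI : ∀ a b : ℝ, IntervalIntegrable F volume a b :=
    fun a b => hFc.intervalIntegrable a b
  have h0k : t 0 ≤ t k := hmono' 0 k (Nat.zero_le k) le_rfl
  have hsum : ∑ i ∈ Finset.range k, ∫ x in (t i)..(t (i+1)), F x
      = ∫ x in (t 0)..(t k), F x :=
    intervalIntegral.sum_integral_adjacent_intervals (fun i _ => hFI _ _)
  have hsplit1 : (∫ x in (0:ℝ)..(t 0), F x) + ∫ x in (t 0)..(t k), F x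
      = ∫ x in (0:ℝ)..(t k), F x :=
    intervalIntegral.integral_add_adjacent_intervals (hFI _ _) (hFI _ _)
  have hsplit2 : (∫ x in (0:ℝ)..(t k), F x) + ∫ x in (t k)..2, F x
      = ∫ x in (0:ℝ)..2, F x :=
    intervalIntegral.integral_add_adjacent_intervals (hFI _ _) (hFI _ _)
  have e0 : ∫ x in (0:ℝ)..(t 0), F x = (t 0) ^ 3 / 3 := by
    rw [intervalIntegral.integral_congr (g := fun x => (x - t 0) ^ 2)
      (fun x hx => pw_left x (by rw [Set.uIcc_of_le h0] at hx; exact hx.2))]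
    rw [integral_sq_shift]
    ring
  have ek : ∫ x in (t k)..2, F x = (2 - t k) ^ 3 / 3 := by
    rw [intervalIntegral.integral_congr (g := fun x => (x - t k) ^ 2)
      (fun x hx => pw_right x (by rw [Set.uIcc_of_le h2] at hx; exact hx.1))]
    rw [integral_sq_shift]
    ring
  have emid : ∀ i ∈ Finset.range k, (∫ x in (t i)..(t (i+1)), F x)
      = (t (i+1) - t i) ^ 3 / 12 := by
    intro i hi
    have hik := Finset.mem_range.mp hi
    have hle := hmono i hik
    rw [intervalIntegral.integral_congr (g := fun x => min ((x - t i) ^ 2) ((x - t (i+1)) ^ 2))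
      (fun x hx => by
        rw [Set.uIcc_of_le hle] at hx
        exact pw_mid i hik x hx.1 hx.2)]
    exact integral_min_sq _ _ hle
  have : ∫ x in (0:ℝ)..2, F x
      = (t 0) ^ 3 / 3 + (2 - t k) ^ 3 / 3 + ∑ i ∈ Finset.range k, (t (i+1) - t i) ^ 3 / 12 := by
    rw [← hsplit2, ← hsplit1, e0, ek, ← hsum, Finset.sum_congr rfl emid]
    ring
  exact this

lemma mono_aux (k : ℕ) (t : ℕ → ℝ) (hmono : ∀ i, i < k → t i ≤ t (i + 1)) :
    ∀ i j, i ≤ j → j ≤ k → t i ≤ t j := by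
  intro i j hij hjk
  induction j with
  | zero => exact le_of_eq (congrArg t (Nat.le_zero.mp hij))
  | succ m ih =>
      rcases Nat.eq_or_lt_of_le hij with h | h
      · rw [h]
      · exact le_trans (ih (by omega) (by omega)) (hmono m (by omega))

lemma key_lb1 (a : ℝ) (h : 1/2 ≤ a) (h' : a ≤ 3/2) :
    (2:ℝ)/3 ≤ a ^ 3 / 3 + (2 - a) ^ 3 / 3 := by nlinarith [sq_nonneg (a - 1)]

set_option maxHeartbeats 1000000 in
lemma key_lb (n k : ℕ) (hn : 2 ≤ n) (hk : k + 1 ≤ n) (t : ℕ → ℝ)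
    (hmono : ∀ i, i < k → t i ≤ t (i + 1)) (hlo : 1/2 ≤ t 0) (hhi : t k ≤ 3/2) :
    1/12 + 1/(12 * ((n:ℝ) - 1) ^ 2)
      ≤ t 0 ^ 3 / 3 + (2 - t k) ^ 3 / 3 + ∑ i ∈ Finset.range k, (t (i + 1) - t i) ^ 3 / 12 := by
  have hN : (1:ℝ) ≤ (n:ℝ) - 1 := by
    have : (2:ℝ) ≤ (n:ℝ) := by exact_mod_cast hn
    linarith
  have hNpos : (0:ℝ) < 12 * ((n:ℝ) - 1) ^ 2 := by positivity
  rcases Nat.eq_zero_or_pos k with hk0 | hkpos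
  · subst hk0
    simp only [Finset.range_zero, Finset.sum_empty, add_zero]
    have h1 : 1/(12 * ((n:ℝ) - 1) ^ 2) ≤ 1/12 := by
      apply one_div_le_one_div_of_le (by norm_num)
      nlinarith
    have h2 := key_lb1 (t 0) hlo hhi
    linarith
  · have hba : t 0 ≤ t k := mono_aux k t hmono 0 k (Nat.zero_le k) le_rfl
    have hlo' : 1/2 ≤ t 0 := hlo
    have hhi0 : t 0 ≤ 3/2 := le_trans hba hhi
    have hlok : 1/2 ≤ t k := le_trans hlo hba
    set a := t 0 with ha
    set b := t k with hb
    have hK : (1:ℝ) ≤ (k:ℝ) := by exact_mod_cast hkpos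
    have hKN : (k:ℝ) ≤ (n:ℝ) - 1 := by
      have : (k:ℝ) + 1 ≤ (n:ℝ) := by exact_mod_cast hk
      linarith
    have hgaps : ∀ i ∈ Finset.range k, 0 ≤ t (i + 1) - t i := fun i hi =>
      sub_nonneg.mpr (hmono i (Finset.mem_range.mp hi))
    have hsum_g : ∑ i ∈ Finset.range k, (t (i + 1) - t i) = b - a := Finset.sum_range_sub t k
    have hpow := pow_sum_div_card_le_sum_pow (s := Finset.range k)
      (f := fun i => t (i + 1) - t i) hgaps 2
    rw [hsum_g, Finset.card_range] at hpow
    -- hpow : (b - a) ^ 3 / (k:ℝ) ^ 2 ≤ ∑ i in range k, (t (i+1) - t i) ^ 3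
    have hsum3 : (b - a) ^ 3 / ((k:ℝ) ^ 2) / 12 ≤ ∑ i ∈ Finset.range k, (t (i + 1) - t i) ^ 3 / 12 := by
      rw [← Finset.sum_div]
      linarith
    set u : ℝ := 1/(12 * (k:ℝ) ^ 2) with hu
    have hKpos : (0:ℝ) < (k:ℝ) ^ 2 := by positivity
    have hupos : 0 < u := by positivity
    have hule : u ≤ 1/12 := by
      rw [hu]
      apply one_div_le_one_div_of_le (by norm_num)
      nlinarith
    have hvu : 1/(12 * ((n:ℝ) - 1) ^ 2) ≤ u := by
      rw [hu]
      apply one_div_le_one_div_of_le (by positivity)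
      nlinarith
    have husub : (b - a) ^ 3 / ((k:ℝ) ^ 2) / 12 = (b - a) ^ 3 * u := by
      rw [hu]; field_simp
    set s : ℝ := b - a with hs
    have hs0 : 0 ≤ s := by simp [hs]; linarith
    have hs1 : s ≤ 1 := by simp [hs]; linarith
    have hs3 : 0 ≤ 1 - s ^ 3 := by have := pow_le_one₀ hs0 hs1 (n := 3); linarith
    have hc1 : 0 ≤ (a - 1/2) ^ 2 * (a + 1) := mul_nonneg (sq_nonneg _) (by linarith)
    have hc2 : 0 ≤ (3/2 - b) ^ 2 * (3 - b) := mul_nonneg (sq_nonneg _) (by linarith)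
    have hc3 : 0 ≤ (1 - s) ^ 2 * (s + 2) := mul_nonneg (sq_nonneg _) (by linarith)
    have hc4 : 0 ≤ (1 - s ^ 3) * (1/12 - u) := mul_nonneg hs3 (by linarith)
    have hfin : 1/12 + 1/(12 * ((n:ℝ) - 1) ^ 2) ≤ a ^ 3 / 3 + (2 - b) ^ 3 / 3 + s ^ 3 * u := by
      nlinarith
    calc 1/12 + 1/(12 * ((n:ℝ) - 1) ^ 2)
        ≤ a ^ 3 / 3 + (2 - b) ^ 3 / 3 + s ^ 3 * u := hfin
      _ = a ^ 3 / 3 + (2 - b) ^ 3 / 3 + (b - a) ^ 3 / ((k:ℝ) ^ 2) / 12 := by rw [husub, hs]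
      _ ≤ _ := by linarith


lemma inf'_add_const (T : Finset ℝ) (hT : T.Nonempty) (f : ℝ → ℝ) (c : ℝ) :
    T.inf' hT (fun s => f s + c) = T.inf' hT f + c := by
  obtain ⟨t0, ht0, h0⟩ := T.exists_mem_eq_inf' hT f
  apply le_antisymm
  · have := Finset.inf'_le (fun s => f s + c) ht0
    rw [h0]
    exact this
  · apply Finset.le_inf'
    intro s hs
    have := Finset.inf'_le f hs
    linarith

lemma distortion_eq (T : Finset ℝ) (hT : T.Nonempty) :
    cDistortion (Measure.map (fun x : ℝ => cpt x 0) (uniformIccM 0 2))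
        ((fun t : ℝ => cpt t 1) '' (T : Set ℝ))
      = 1 + (1/2) * ∫ x in (0:ℝ)..2, T.inf' hT (fun s => (x - s) ^ 2) := by
  unfold cDistortion
  have h1 : (fun y : E2 => ⨅ a : ((fun t : ℝ => cpt t 1) '' (T : Set ℝ)), dist y (a : E2) ^ 2)
      = fun y => T.inf' hT (fun s => dist y (cpt s 1) ^ 2) := funext (iInf_dist_eq T hT)
  rw [h1]
  have hcont : Continuous (fun y : E2 => T.inf' hT (fun s => dist y (cpt s 1) ^ 2)) :=
    continuous_inf' T hT (g := fun s y => dist y (cpt s 1) ^ 2)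
      (fun s => (continuous_id.dist continuous_const).pow 2)
  rw [integral_map_uniform _ hcont]
  have h2 : ∀ x : ℝ, T.inf' hT (fun s => dist (cpt x 0) (cpt s 1) ^ 2)
      = T.inf' hT (fun s => (x - s) ^ 2) + 1 := by
    intro x
    rw [← inf'_add_const T hT (fun s => (x - s) ^ 2) 1]
    congr 1
    funext s
    exact dist_cpt_sq x s
  simp_rw [h2]
  have hGc : Continuous (fun x : ℝ => T.inf' hT (fun s => (x - s) ^ 2)) :=
    continuous_inf' T hT (g := fun s x => (x - s) ^ 2) (fun s => by continuity)
  rw [intervalIntegral.integral_add (hGc.intervalIntegrable _ _)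
    (intervalIntegrable_const (μ := volume))]
  rw [intervalIntegral.integral_const]
  simp
  ring

lemma enum (T : Finset ℝ) (hT : T.Nonempty) :
    ∃ k : ℕ, ∃ t : ℕ → ℝ, k + 1 = T.card ∧ (∀ i, i < k → t i ≤ t (i + 1)) ∧
      T = (Finset.range (k + 1)).image t ∧ (∀ i, i ≤ k → t i ∈ T) := by
  obtain ⟨k, hk⟩ : ∃ k, T.card = k + 1 := ⟨T.card - 1, by have := Finset.card_pos.mpr hT; omega⟩
  refine ⟨k, fun i => T.orderEmbOfFin hk ⟨min i k, by omega⟩, hk.symm, ?_, ?_, ?_⟩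
  · intro i hi
    apply (T.orderEmbOfFin hk).monotone
    simp only [Fin.mk_le_mk]
    omega
  · ext x
    simp only [Finset.mem_image, Finset.mem_range]
    constructor
    · intro hx
      have hx' : x ∈ Set.range (T.orderEmbOfFin hk) := by
        rw [Finset.range_orderEmbOfFin]; exact hx
      obtain ⟨j, hj⟩ := hx'
      refine ⟨j.val, by omega, ?_⟩
      rw [← hj]
      congr 1
      exact Fin.ext (by simp; omega)
    · rintro ⟨i, hi, rfl⟩
      exact Finset.orderEmbOfFin_mem ..
  · intro i hi
    exact Finset.orderEmbOfFin_mem ..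

lemma exists_rep (α : Set E2) (hsub : α ⊆ (fun t : ℝ => cpt t 1) '' Icc (1/2) (3/2))
    (hfin : α.Finite) (hne : 1 ≤ α.ncard) :
    ∃ T : Finset ℝ, T.Nonempty ∧ (↑T : Set ℝ) ⊆ Icc (1/2) (3/2) ∧ T.card = α.ncard ∧
      α = (fun t : ℝ => cpt t 1) '' (↑T : Set ℝ) := by
  obtain ⟨T₀, hT₀sub, hT₀eq⟩ := Set.subset_image_iff.mp hsub
  have hT₀fin : T₀.Finite := by
    apply Set.Finite.of_finite_image _ cpt_inj.injOn
    rw [hT₀eq]; exact hfin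
  refine ⟨hT₀fin.toFinset, ?_, ?_, ?_, ?_⟩
  · rw [← Finset.card_pos]
    have : α.ncard = T₀.ncard := by rw [← hT₀eq, Set.ncard_image_of_injective _ cpt_inj]
    rw [← Set.ncard_eq_toFinset_card T₀ hT₀fin, ← this]
    omega
  · rw [Set.Finite.coe_toFinset]; exact hT₀sub
  · rw [← Set.ncard_eq_toFinset_card T₀ hT₀fin, ← hT₀eq,
      Set.ncard_image_of_injective _ cpt_inj]
  · rw [Set.Finite.coe_toFinset]; exact hT₀eq.symm


lemma key_integral' (T : Finset ℝ) (hT : T.Nonempty) (k : ℕ) (t : ℕ → ℝ)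
    (hTeq : T = (Finset.range (k + 1)).image t) (hmono : ∀ i, i < k → t i ≤ t (i + 1))
    (h0 : 0 ≤ t 0) (h2 : t k ≤ 2) :
    ∫ x in (0:ℝ)..2, T.inf' hT (fun s => (x - s) ^ 2)
      = t 0 ^ 3 / 3 + (2 - t k) ^ 3 / 3 + ∑ i ∈ Finset.range k, (t (i + 1) - t i) ^ 3 / 12 := by
  subst hTeq
  exact key_integral k t hmono h0 h2 hT

lemma value_lb (n : ℕ) (hn : 2 ≤ n) (v : ℝ)
    (hv : ∃ α : Set E2, α ⊆ segment ℝ (cpt (1/2) 1) (cpt (3/2) 1) ∧ α.Finite ∧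
      1 ≤ α.ncard ∧ α.ncard ≤ n ∧
      v = cDistortion (Measure.map (fun x : ℝ => cpt x 0) (uniformIccM 0 2)) α) :
    25/24 + 1/(24 * ((n:ℝ) - 1) ^ 2) ≤ v := by
  obtain ⟨α, hsub, hfin, hge, hle, hveq⟩ := hv
  rw [segment_eq] at hsub
  obtain ⟨T, hT, hTsub, hTcard, hTeq⟩ := exists_rep α hsub hfin hge
  obtain ⟨k, t, hk, hmono, hTenum, hmem⟩ := enum T hT
  have hlo : 1/2 ≤ t 0 := (hTsub (hmem 0 (Nat.zero_le k))).1
  have hhi : t k ≤ 3/2 := (hTsub (hmem k le_rfl)).2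
  have hJ := key_integral' T hT k t hTenum hmono (by linarith) (by linarith)
  have hD : v = 1 + (1/2) * ∫ x in (0:ℝ)..2, T.inf' hT (fun s => (x - s) ^ 2) := by
    rw [hveq, hTeq, distortion_eq T hT]
  have hlb := key_lb n k hn (by omega) t hmono hlo hhi
  have hN1 : (1:ℝ) ≤ (n:ℝ) - 1 := by
    have : (2:ℝ) ≤ (n:ℝ) := by exact_mod_cast hn
    linarith
  have hid : 25/24 + 1/(24 * ((n:ℝ) - 1) ^ 2)
      = 1 + (1/2) * (1/12 + 1/(12 * ((n:ℝ) - 1) ^ 2)) := by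
    have h2 : ((n:ℝ) - 1) ^ 2 ≠ 0 := by nlinarith
    field_simp
    ring
  rw [hD, hJ, hid]
  linarith

lemma value_lb1 (v : ℝ)
    (hv : ∃ α : Set E2, α ⊆ segment ℝ (cpt (1/2) 1) (cpt (3/2) 1) ∧ α.Finite ∧
      1 ≤ α.ncard ∧ α.ncard ≤ 1 ∧
      v = cDistortion (Measure.map (fun x : ℝ => cpt x 0) (uniformIccM 0 2)) α) :
    4/3 ≤ v := by
  obtain ⟨α, hsub, hfin, hge, hle, hveq⟩ := hv
  rw [segment_eq] at hsub
  obtain ⟨T, hT, hTsub, hTcard, hTeq⟩ := exists_rep α hsub hfin hge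
  obtain ⟨k, t, hk, hmono, hTenum, hmem⟩ := enum T hT
  have hk0 : k = 0 := by omega
  subst hk0
  have hlo : 1/2 ≤ t 0 := (hTsub (hmem 0 le_rfl)).1
  have hhi : t 0 ≤ 3/2 := (hTsub (hmem 0 le_rfl)).2
  have hJ := key_integral' T hT 0 t hTenum hmono (by linarith) (by linarith)
  have hD : v = 1 + (1/2) * ∫ x in (0:ℝ)..2, T.inf' hT (fun s => (x - s) ^ 2) := by
    rw [hveq, hTeq, distortion_eq T hT]
  have hlb := key_lb1 (t 0) hlo hhi
  rw [hD, hJ]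
  simp only [Finset.range_zero, Finset.sum_empty, add_zero]
  linarith

lemma conf_spec (n : ℕ) (hn : 2 ≤ n) :
    ∃ T : Finset ℝ, T.Nonempty ∧ (↑T : Set ℝ) ⊆ Icc (1/2) (3/2) ∧ T.card ≤ n ∧
      (↑T : Set ℝ) = (fun i : ℕ => 1/2 + (i:ℝ)/((n:ℝ) - 1)) '' (Set.Iio n) ∧
      cDistortion (Measure.map (fun x : ℝ => cpt x 0) (uniformIccM 0 2))
          ((fun t : ℝ => cpt t 1) '' (↑T : Set ℝ))
        = 25/24 + 1/(24 * ((n:ℝ) - 1) ^ 2) := by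
  have hN1 : (1:ℝ) ≤ (n:ℝ) - 1 := by
    have : (2:ℝ) ≤ (n:ℝ) := by exact_mod_cast hn
    linarith
  set N : ℝ := (n:ℝ) - 1 with hN
  have hNne : N ≠ 0 := by linarith
  set tconf : ℕ → ℝ := fun i => 1/2 + (i:ℝ)/N with htconf
  set T : Finset ℝ := (Finset.range n).image tconf with hTdef
  have hT : T.Nonempty := ⟨tconf 0, Finset.mem_image.mpr ⟨0, Finset.mem_range.mpr (by omega), rfl⟩⟩
  have hcast : ((n - 1 : ℕ) : ℝ) = N := by
    rw [hN, Nat.cast_sub (by omega)]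
    norm_num
  have hlastval : tconf (n - 1) = 3/2 := by
    show 1/2 + ((n - 1 : ℕ) : ℝ)/N = 3/2
    rw [hcast, div_self hNne]
    norm_num
  have h0val : tconf 0 = 1/2 := by simp [htconf]
  have hsubIcc : (↑T : Set ℝ) ⊆ Icc (1/2) (3/2) := by
    intro x hx
    rw [hTdef] at hx
    simp only [Finset.coe_image, Finset.coe_range, Set.mem_image, Set.mem_Iio] at hx
    obtain ⟨i, hi, rfl⟩ := hx
    have hiN : (i:ℝ) ≤ N := by
      rw [hN]
      have : (i:ℝ) + 1 ≤ (n:ℝ) := by exact_mod_cast hi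
      linarith
    have hd0 : 0 ≤ (i:ℝ)/N := by positivity
    have hd1 : (i:ℝ)/N ≤ 1 := by
      rw [div_le_one (by linarith)]
      exact hiN
    constructor
    · rw [htconf]; simp only; linarith
    · rw [htconf]; simp only; linarith
  have hTeq : T = (Finset.range ((n - 1) + 1)).image tconf := by
    rw [hTdef]
    congr 2
    omega
  have hmono : ∀ i, i < n - 1 → tconf i ≤ tconf (i + 1) := by
    intro i _
    have h2 : (0:ℝ) < N := by linarith
    show 1/2 + (i:ℝ)/N ≤ 1/2 + ((i + 1 : ℕ) : ℝ)/N
    have h1 := (div_le_div_iff_of_pos_right h2).mpr (by push_cast; linarith : (i:ℝ) ≤ ((i + 1 : ℕ) : ℝ))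
    linarith
  have hJ := key_integral' T hT (n - 1) tconf hTeq hmono
    (by rw [h0val]; norm_num) (by rw [hlastval]; norm_num)
  have hgap : ∀ i ∈ Finset.range (n - 1), (tconf (i + 1) - tconf i) ^ 3 / 12 = (1/N) ^ 3 / 12 := by
    intro i _
    have hg : tconf (i + 1) - tconf i = 1/N := by
      show (1/2 + ((i + 1 : ℕ) : ℝ)/N) - (1/2 + (i:ℝ)/N) = 1/N
      push_cast
      field_simp
      ring
    rw [hg]
  rw [Finset.sum_congr rfl hgap, Finset.sum_const, Finset.card_range, nsmul_eq_mul, hcast] at hJ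
  refine ⟨T, hT, hsubIcc, ?_, ?_, ?_⟩
  · rw [hTdef]
    exact Finset.card_image_le.trans (by simp)
  · rw [hTdef]
    rw [Finset.coe_image, Finset.coe_range]
  · rw [distortion_eq T hT, hJ, h0val, hlastval]
    have hsq : N ^ 2 ≠ 0 := pow_ne_zero _ hNne
    field_simp
    ring

lemma cq_eq (n : ℕ) (hn : 2 ≤ n) :
    cqError (Measure.map (fun x : ℝ => cpt x 0) (uniformIccM 0 2))
        (segment ℝ (cpt (1/2) 1) (cpt (3/2) 1)) n
      = 25/24 + 1/(24 * ((n:ℝ) - 1) ^ 2) := by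
  obtain ⟨T, hT, hTsub, hTcard, hTcoe, hTval⟩ := conf_spec n hn
  set v : ℝ := 25/24 + 1/(24 * ((n:ℝ) - 1) ^ 2) with hv
  have hmem : v ∈ {w : ℝ | ∃ α : Set E2, α ⊆ segment ℝ (cpt (1/2) 1) (cpt (3/2) 1) ∧ α.Finite ∧
      1 ≤ α.ncard ∧ α.ncard ≤ n ∧
      w = cDistortion (Measure.map (fun x : ℝ => cpt x 0) (uniformIccM 0 2)) α} := by
    refine ⟨(fun t : ℝ => cpt t 1) '' (↑T : Set ℝ), ?_, ?_, ?_, ?_, hTval.symm⟩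
    · rw [segment_eq]
      exact Set.image_mono hTsub
    · exact T.finite_toSet.image _
    · have := (Set.ncard_pos (T.finite_toSet.image (fun t : ℝ => cpt t 1))).mpr
        ((Finset.coe_nonempty.mpr hT).image (fun t : ℝ => cpt t 1))
      omega
    · exact (Set.ncard_image_le T.finite_toSet).trans
        (le_of_eq_of_le (Set.ncard_coe_finset T) hTcard)
  unfold cqError
  apply le_antisymm
  · exact csInf_le ⟨v, fun w hw => value_lb n hn w hw⟩ hmem
  · exact le_csInf ⟨v, hmem⟩ (fun w hw => value_lb n hn w hw)

lemma dist1 : cDistortion (Measure.map (fun x : ℝ => cpt x 0) (uniformIccM 0 2))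
    {cpt 1 1} = 4/3 := by
  have himg : ({cpt 1 1} : Set E2) = (fun t : ℝ => cpt t 1) '' (↑({1} : Finset ℝ) : Set ℝ) := by
    simp
  have hT : ({1} : Finset ℝ).Nonempty := ⟨1, Finset.mem_singleton_self 1⟩
  have hTeq : ({1} : Finset ℝ) = (Finset.range (0 + 1)).image (fun _ : ℕ => (1:ℝ)) := by
    simp
  have hJ := key_integral' ({1} : Finset ℝ) hT 0 (fun _ : ℕ => (1:ℝ)) hTeq
    (by intro i hi; omega) (by norm_num) (by norm_num)
  rw [himg, distortion_eq ({1} : Finset ℝ) hT, hJ]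
  norm_num

lemma cq_eq1 :
    cqError (Measure.map (fun x : ℝ => cpt x 0) (uniformIccM 0 2))
        (segment ℝ (cpt (1/2) 1) (cpt (3/2) 1)) 1 = 4/3 := by
  have hmem : (4/3 : ℝ) ∈ {w : ℝ | ∃ α : Set E2, α ⊆ segment ℝ (cpt (1/2) 1) (cpt (3/2) 1) ∧
      α.Finite ∧ 1 ≤ α.ncard ∧ α.ncard ≤ 1 ∧
      w = cDistortion (Measure.map (fun x : ℝ => cpt x 0) (uniformIccM 0 2)) α} := by
    refine ⟨{cpt 1 1}, ?_, Set.finite_singleton _, ?_, ?_, dist1.symm⟩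
    · rw [segment_eq]
      exact Set.singleton_subset_iff.mpr ⟨1, by norm_num, rfl⟩
    · simp
    · simp
  unfold cqError
  apply le_antisymm
  · exact csInf_le ⟨4/3, fun w hw => value_lb1 w hw⟩ hmem
  · exact le_csInf ⟨4/3, hmem⟩ (fun w hw => value_lb1 w hw)

/-- For the uniform distribution `P` on `{(x,0) : 0 ≤ x ≤ 2}`, with constraint the segment of the
line `y = 1` joining `(1/2, 1)` and `(3/2, 1)`: `{(1,1)}` is an optimal set of one point,
`{(1/2,1), (3/2,1)}` is an optimal set of two points, and for every `n ≥ 3` the set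
`{(aᵢ, 1) : 1 ≤ i ≤ n}` with `a₁ = 1/2`, `aᵢ = 1/2 + (i-1)/(n-1)` for `2 ≤ i ≤ n-1` and
`aₙ = 3/2` is an optimal set of `n` points, with `n`th constrained quantization error
`(25n² - 50n + 26)/(24(n-1)²)`. -/
theorem optimal_sets_uniform_segment_line_y_eq_one_middle :
    IsOptimalNSet (Measure.map (fun x : ℝ => cpt x 0) (uniformIccM 0 2))
      (segment ℝ (cpt (1/2) 1) (cpt (3/2) 1)) 1 {cpt 1 1} ∧
    IsOptimalNSet (Measure.map (fun x : ℝ => cpt x 0) (uniformIccM 0 2))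
      (segment ℝ (cpt (1/2) 1) (cpt (3/2) 1)) 2 {cpt (1/2) 1, cpt (3/2) 1} ∧
    ∀ n : ℕ, 3 ≤ n →
      IsOptimalNSet (Measure.map (fun x : ℝ => cpt x 0) (uniformIccM 0 2))
        (segment ℝ (cpt (1/2) 1) (cpt (3/2) 1)) n
        ((fun i : ℕ => cpt
            (if i = 1 then 1/2
              else if i = n then 3/2
              else 1/2 + ((i : ℝ) - 1) / ((n : ℝ) - 1)) 1) '' Icc 1 n) ∧
      cqError (Measure.map (fun x : ℝ => cpt x 0) (uniformIccM 0 2))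
        (segment ℝ (cpt (1/2) 1) (cpt (3/2) 1)) n =
        (25 * (n : ℝ) ^ 2 - 50 * (n : ℝ) + 26) / (24 * ((n : ℝ) - 1) ^ 2) := by
  refine ⟨?_, ?_, ?_⟩
  · -- n = 1
    refine ⟨?_, Set.finite_singleton _, by simp, by simp, ?_⟩
    · rw [segment_eq]
      exact Set.singleton_subset_iff.mpr ⟨1, by norm_num, rfl⟩
    · rw [dist1, cq_eq1]
  · -- n = 2
    obtain ⟨T, hT, hTsub, hTcard, hTcoe, hTval⟩ := conf_spec 2 le_rfl
    have hcoe' : (↑T : Set ℝ) = ({1/2, 3/2} : Set ℝ) := by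
      rw [hTcoe]
      ext x
      simp only [Set.mem_image, Set.mem_Iio, Set.mem_insert_iff, Set.mem_singleton_iff]
      constructor
      · rintro ⟨i, hi, rfl⟩
        interval_cases i
        · left; norm_num
        · right; norm_num
      · rintro (rfl | rfl)
        · exact ⟨0, by norm_num⟩
        · exact ⟨1, by norm_num⟩
    have hset : ({cpt (1/2) 1, cpt (3/2) 1} : Set E2) = (fun t : ℝ => cpt t 1) '' (↑T : Set ℝ) := by
      rw [hcoe', Set.image_pair]
    refine ⟨?_, ?_, ?_, ?_, ?_⟩
    · rw [segment_eq, hset]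
      exact Set.image_mono hTsub
    · rw [hset]
      exact T.finite_toSet.image _
    · rw [hset]
      have := (Set.ncard_pos (T.finite_toSet.image (fun t : ℝ => cpt t 1))).mpr
        ((Finset.coe_nonempty.mpr hT).image (fun t : ℝ => cpt t 1))
      omega
    · rw [hset]
      exact (Set.ncard_image_le T.finite_toSet).trans
        (le_of_eq_of_le (Set.ncard_coe_finset T) hTcard)
    · rw [hset, hTval, cq_eq 2 le_rfl]
  · -- n ≥ 3
    intro n hn
    obtain ⟨T, hT, hTsub, hTcard, hTcoe, hTval⟩ := conf_spec n (by omega)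
    have hNne : (n:ℝ) - 1 ≠ 0 := by
      have : (3:ℝ) ≤ (n:ℝ) := by exact_mod_cast hn
      intro h
      linarith
    have hval : ∀ i : ℕ, 1 ≤ i → i ≤ n →
        (1/2 + ((i - 1 : ℕ):ℝ)/((n:ℝ) - 1))
          = (if i = 1 then 1/2 else if i = n then 3/2
              else 1/2 + ((i:ℝ) - 1)/((n:ℝ) - 1)) := by
      intro i h1 h2
      rcases eq_or_ne i 1 with rfl | hne1
      · simp
      rcases eq_or_ne i n with rfl | hnen
      · rw [if_neg hne1, if_pos rfl]
        have hc : ((i - 1 : ℕ):ℝ) = (i:ℝ) - 1 := by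
          rw [Nat.cast_sub h1]
          norm_num
        rw [hc, div_self hNne]
        norm_num
      · rw [if_neg hne1, if_neg hnen, Nat.cast_sub h1]
        norm_num
    have hsetn : ((fun i : ℕ => cpt
          (if i = 1 then 1/2 else if i = n then 3/2
            else 1/2 + ((i : ℝ) - 1) / ((n : ℝ) - 1)) 1) '' Icc 1 n)
        = (fun t : ℝ => cpt t 1) '' (↑T : Set ℝ) := by
      rw [hTcoe, ← Set.image_comp]
      ext y
      simp only [Set.mem_image, Set.mem_Icc, Set.mem_Iio, Function.comp_apply]
      constructor
      · rintro ⟨i, ⟨hi1, hin⟩, rfl⟩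
        refine ⟨i - 1, by omega, ?_⟩
        exact congrArg (fun t : ℝ => cpt t 1) (hval i hi1 hin)
      · rintro ⟨j, hj, rfl⟩
        refine ⟨j + 1, ⟨by omega, by omega⟩, ?_⟩
        have hj1 : (j + 1 - 1 : ℕ) = j := rfl
        exact congrArg (fun t : ℝ => cpt t 1)
          ((hval (j + 1) (by omega) (by omega)).symm.trans (by rw [hj1]))
    constructor
    · refine ⟨?_, ?_, ?_, ?_, ?_⟩
      · rw [segment_eq, hsetn]
        exact Set.image_mono hTsub
      · rw [hsetn]
        exact T.finite_toSet.image _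
      · rw [hsetn]
        have := (Set.ncard_pos (T.finite_toSet.image (fun t : ℝ => cpt t 1))).mpr
          ((Finset.coe_nonempty.mpr hT).image (fun t : ℝ => cpt t 1))
        omega
      · rw [hsetn]
        exact (Set.ncard_image_le T.finite_toSet).trans
          (le_of_eq_of_le (Set.ncard_coe_finset T) hTcard)
      · rw [hsetn, hTval, cq_eq n (by omega)]
    · rw [cq_eq n (by omega)]
      field_simp
      ring
end Aux
end
end

section
/- Let P be the uniform probability measure on the unit circle in ℝ², let a > 0, and let the constraint be the concentric circle L of radius a. Then for every θ ∈ [0,2π], the antipodal pair {(a cos θ, a sin θ), (−a cos θ, −a sin θ)} is an optimal set of two points, and the second constrained quantization error is V_2 = 1 + a² − 4a/π. -/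
open MeasureTheory Real Set

noncomputable section

/-- The uniform probability distribution on the unit circle: the pushforward of the uniform
distribution on `[0, 2π]` under `t ↦ (cos t, sin t)`. -/
def circleUniform : Measure E2 :=
  Measure.map (fun t : ℝ => cpt (Real.cos t) (Real.sin t)) (uniformIccM 0 (2 * π))

/-! ### Auxiliary lemmas -/

theorem aux_iInf_pair (x p q : E2) :
    (⨅ a : ({p, q} : Set E2), dist x (a : E2) ^ 2) = min (dist x p ^ 2) (dist x q ^ 2) := by
  have hbdd : BddBelow (Set.range fun a : ({p, q} : Set E2) => dist x (a : E2) ^ 2) := by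
    refine ⟨0, ?_⟩; rintro y ⟨⟨b, hb⟩, rfl⟩; positivity
  apply le_antisymm
  · exact le_min (ciInf_le hbdd ⟨p, by simp⟩) (ciInf_le hbdd ⟨q, by simp⟩)
  · apply le_ciInf; rintro ⟨y, hy⟩
    rcases hy with rfl | rfl
    · exact min_le_left _ _
    · exact min_le_right _ _

theorem aux_cont_circle : Continuous (fun t : ℝ => cpt (Real.cos t) (Real.sin t)) := by
  have h : Continuous (fun t : ℝ => (![Real.cos t, Real.sin t] : Fin 2 → ℝ)) := by
    refine continuous_pi fun i => ?_
    fin_cases i <;> simp <;> fun_prop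
  exact (PiLp.continuous_toLp 2 (fun _ : Fin 2 => ℝ)).comp h

theorem aux_dist_sq (a t θ : ℝ) :
    dist (cpt (Real.cos t) (Real.sin t)) (cpt (a * Real.cos θ) (a * Real.sin θ)) ^ 2
      = 1 + a ^ 2 - 2 * a * Real.cos (t - θ) := by
  rw [EuclideanSpace.dist_eq, Real.sq_sqrt (by positivity)]
  simp [cpt, Fin.sum_univ_two, Real.dist_eq, sq_abs, Real.cos_sub]
  nlinarith [Real.sin_sq_add_cos_sq t, Real.sin_sq_add_cos_sq θ]

theorem aux_abssin_int : ∫ t in (0:ℝ)..(2*π), |Real.sin t| = 4 := by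
  have h1 : ∫ t in (0:ℝ)..π, |Real.sin t| = 2 := by
    rw [intervalIntegral.integral_congr (g := Real.sin) ?_, integral_sin]
    · norm_num
    · intro x hx
      rw [Set.uIcc_of_le Real.pi_nonneg] at hx
      exact abs_of_nonneg (Real.sin_nonneg_of_mem_Icc hx)
  have h2 : ∫ t in π..(2*π), |Real.sin t| = 2 := by
    rw [intervalIntegral.integral_congr (g := fun t => -Real.sin t) ?_]
    · rw [intervalIntegral.integral_neg, integral_sin]
      norm_num
    · intro x hx
      rw [Set.uIcc_of_le (by linarith [Real.pi_pos])] at hx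
      refine abs_of_nonpos ?_
      have h3 : Real.sin (x - π) = -Real.sin x := Real.sin_sub_pi x
      have h4 : 0 ≤ Real.sin (x - π) := by
        apply Real.sin_nonneg_of_mem_Icc
        constructor <;> [linarith [hx.1]; linarith [hx.2]]
      linarith
  have := intervalIntegral.integral_add_adjacent_intervals (a := (0:ℝ)) (b := π) (c := 2*π)
    (μ := volume) (f := fun t => |Real.sin t|)
    ((continuous_sin.abs).intervalIntegrable _ _) ((continuous_sin.abs).intervalIntegrable _ _)
  rw [h1, h2] at this
  linarith

theorem aux_abssin_int' (m : ℝ) : ∫ t in (0:ℝ)..(2*π), |Real.sin (t - m)| = 4 := by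
  rw [intervalIntegral.integral_comp_sub_right (fun x => |Real.sin x|) m]
  have hper : Function.Periodic (fun x => |Real.sin x|) (2*π) := fun x => by
    simp [Real.sin_add_two_pi]
  have := hper.intervalIntegral_add_eq (-m) 0
  simp only [show -m + 2*π = 2*π - m by ring, zero_add] at this
  rw [zero_sub, this, aux_abssin_int]

theorem aux_cos_int (m : ℝ) : ∫ t in (0:ℝ)..(2*π), Real.cos (t - m) = 0 := by
  rw [intervalIntegral.integral_comp_sub_right (fun x => Real.cos x) m, integral_cos]
  rw [show 2*π - m = -m + 2*π by ring, Real.sin_add_two_pi]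
  simp

theorem aux_max_cos (t φ ψ : ℝ) : max (Real.cos (t - φ)) (Real.cos (t - ψ))
    = Real.cos ((φ - ψ)/2) * Real.cos (t - (φ + ψ)/2)
      + |Real.sin ((φ - ψ)/2)| * |Real.sin (t - (φ + ψ)/2)| := by
  have hmax : ∀ u v : ℝ, max u v = (u + v)/2 + |u - v|/2 := by
    intro u v
    rcases le_total u v with h | h
    · rw [max_eq_right h, abs_of_nonpos (by linarith)]; ring
    · rw [max_eq_left h, abs_of_nonneg (by linarith)]; ring
  rw [hmax]
  have hsum : Real.cos (t - φ) + Real.cos (t - ψ)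
      = 2 * Real.cos (t - (φ + ψ)/2) * Real.cos ((φ - ψ)/2) := by
    rw [Real.cos_add_cos]
    rw [show ((t-φ) + (t-ψ))/2 = t - (φ + ψ)/2 by ring, show ((t-φ) - (t-ψ))/2 = -((φ - ψ)/2) by ring]
    rw [Real.cos_neg]
  have hdiff : Real.cos (t - φ) - Real.cos (t - ψ)
      = 2 * Real.sin (t - (φ + ψ)/2) * Real.sin ((φ - ψ)/2) := by
    rw [Real.cos_sub_cos]
    rw [show ((t-φ) + (t-ψ))/2 = t - (φ + ψ)/2 by ring, show ((t-φ) - (t-ψ))/2 = -((φ - ψ)/2) by ring]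
    rw [Real.sin_neg]
    ring
  rw [hsum, hdiff, abs_mul, abs_mul]
  rw [show |(2:ℝ)| = 2 by norm_num]
  ring

/-- The key computation: the distortion error of the pair of points at angles `φ` and `ψ`. -/
theorem aux_distortion_pair (a : ℝ) (ha : 0 < a) (φ ψ : ℝ) :
    cDistortion circleUniform
        {cpt (a * Real.cos φ) (a * Real.sin φ), cpt (a * Real.cos ψ) (a * Real.sin ψ)}
      = 1 + a ^ 2 - (4 * a / π) * |Real.sin ((φ - ψ)/2)| := by
  set p := cpt (a * Real.cos φ) (a * Real.sin φ)
  set q := cpt (a * Real.cos ψ) (a * Real.sin ψ)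
  have hfc : Continuous (fun x : E2 => min (dist x p ^ 2) (dist x q ^ 2)) := by
    exact ((continuous_id.dist continuous_const).pow 2).min
      ((continuous_id.dist continuous_const).pow 2)
  have hint : cDistortion circleUniform {p, q}
      = ∫ x, min (dist x p ^ 2) (dist x q ^ 2) ∂circleUniform := by
    unfold cDistortion
    congr 1
    funext x
    exact aux_iInf_pair x p q
  rw [hint]
  unfold circleUniform
  rw [MeasureTheory.integral_map aux_cont_circle.aemeasurable hfc.aestronglyMeasurable]
  unfold uniformIccM
  rw [MeasureTheory.integral_smul_measure]
  have htwo : (0:ℝ) ≤ 2 * π := by positivity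
  have hIoc : ∫ t in Icc (0:ℝ) (2*π), min (dist (cpt (Real.cos t) (Real.sin t)) p ^ 2)
        (dist (cpt (Real.cos t) (Real.sin t)) q ^ 2)
      = ∫ t in (0:ℝ)..(2*π), min (dist (cpt (Real.cos t) (Real.sin t)) p ^ 2)
        (dist (cpt (Real.cos t) (Real.sin t)) q ^ 2) := by
    rw [MeasureTheory.integral_Icc_eq_integral_Ioc, intervalIntegral.integral_of_le htwo]
  rw [hIoc]
  have hval : ∫ t in (0:ℝ)..(2*π), min (dist (cpt (Real.cos t) (Real.sin t)) p ^ 2)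
        (dist (cpt (Real.cos t) (Real.sin t)) q ^ 2)
      = 2*π*(1 + a^2) - 8*a*|Real.sin ((φ - ψ)/2)| := by
    have heq : ∀ t : ℝ, min (dist (cpt (Real.cos t) (Real.sin t)) p ^ 2)
          (dist (cpt (Real.cos t) (Real.sin t)) q ^ 2)
        = (1 + a^2) - (2*a*Real.cos ((φ - ψ)/2)) * Real.cos (t - (φ + ψ)/2)
            - (2*a*|Real.sin ((φ - ψ)/2)|) * |Real.sin (t - (φ + ψ)/2)| := by
      intro t
      rw [aux_dist_sq a t φ, aux_dist_sq a t ψ]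
      have hminmax : min (1 + a^2 - 2*a*Real.cos (t - φ)) (1 + a^2 - 2*a*Real.cos (t - ψ))
          = 1 + a^2 - 2*a*max (Real.cos (t - φ)) (Real.cos (t - ψ)) := by
        rcases le_total (Real.cos (t - φ)) (Real.cos (t - ψ)) with h | h
        · rw [max_eq_right h, min_eq_right (by nlinarith)]
        · rw [max_eq_left h, min_eq_left (by nlinarith)]
      rw [hminmax, aux_max_cos t φ ψ]
      ring
    rw [intervalIntegral.integral_congr (fun t _ => heq t)]
    have i1 : IntervalIntegrable (fun _ : ℝ => (1 + a^2)) volume 0 (2*π) :=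
      intervalIntegrable_const
    have i2 : IntervalIntegrable
        (fun t : ℝ => (2*a*Real.cos ((φ - ψ)/2)) * Real.cos (t - (φ + ψ)/2)) volume 0 (2*π) := by
      apply Continuous.intervalIntegrable; fun_prop
    have i3 : IntervalIntegrable
        (fun t : ℝ => (2*a*|Real.sin ((φ - ψ)/2)|) * |Real.sin (t - (φ + ψ)/2)|)
        volume 0 (2*π) := by
      apply Continuous.intervalIntegrable; fun_prop
    rw [intervalIntegral.integral_sub (i1.sub i2) i3, intervalIntegral.integral_sub i1 i2]
    rw [intervalIntegral.integral_const, intervalIntegral.integral_const_mul,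
      intervalIntegral.integral_const_mul, aux_cos_int, aux_abssin_int']
    simp only [smul_eq_mul]
    ring
  rw [hval]
  have hpi : π ≠ 0 := Real.pi_ne_zero
  have htoReal : ((ENNReal.ofReal (2*π - 0))⁻¹).toReal = (2*π)⁻¹ := by
    rw [ENNReal.toReal_inv, ENNReal.toReal_ofReal (by nlinarith [Real.pi_pos])]
    norm_num
  rw [htoReal]
  rw [smul_eq_mul]
  field_simp
  ring

/-- Every point of the sphere of radius `a > 0` has a polar representation. -/
theorem aux_polar (a : ℝ) (ha : 0 < a) (p : E2) (hp : p ∈ Metric.sphere (0 : E2) a) :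
    ∃ θ : ℝ, p = cpt (a * Real.cos θ) (a * Real.sin θ) := by
  have hn : ‖p‖ = a := by simpa using hp
  set z : ℂ := ⟨p 0, p 1⟩ with hz
  have habs : ‖z‖ = a := by
    rw [Complex.norm_def, Complex.normSq_mk]
    rw [EuclideanSpace.norm_eq] at hn
    simp only [Real.norm_eq_abs, Fin.sum_univ_two, sq_abs] at hn
    rw [show p 0 * p 0 + p 1 * p 1 = p 0 ^ 2 + p 1 ^ 2 by ring]
    exact hn
  have hz0 : z ≠ 0 := by
    intro h
    rw [h] at habs
    simp at habs
    linarith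
  refine ⟨Complex.arg z, ?_⟩
  have hc : Real.cos (Complex.arg z) = p 0 / a := by
    rw [Complex.cos_arg hz0, habs]
  have hs : Real.sin (Complex.arg z) = p 1 / a := by
    rw [Complex.sin_arg, habs]
  ext i
  fin_cases i
  · show p 0 = _
    simp [cpt, hc]
    field_simp
  · show p 1 = _
    simp [cpt, hs]
    field_simp

theorem aux_mem_sphere (a : ℝ) (ha : 0 < a) (θ : ℝ) :
    cpt (a * Real.cos θ) (a * Real.sin θ) ∈ Metric.sphere (0 : E2) a := by
  rw [mem_sphere_zero_iff_norm, EuclideanSpace.norm_eq]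
  simp only [cpt, Real.norm_eq_abs, Fin.sum_univ_two, sq_abs, Matrix.cons_val_zero,
    Matrix.cons_val_one, Matrix.head_cons]
  rw [show (a * Real.cos θ)^2 + (a * Real.sin θ)^2 = a^2 by
    nlinarith [Real.sin_sq_add_cos_sq θ]]
  exact Real.sqrt_sq ha.le

theorem aux_bound_step (a d : ℝ) (ha : 0 < a) :
    1 + a ^ 2 - 4 * a / π ≤ 1 + a ^ 2 - (4 * a / π) * |Real.sin d| := by
  have h1 : |Real.sin d| ≤ 1 := Real.abs_sin_le_one d
  have h2 : (0:ℝ) ≤ 4 * a / π := by positivity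
  nlinarith

theorem aux_lower_bound (a : ℝ) (ha : 0 < a) (v : ℝ)
    (hv : v ∈ {v : ℝ | ∃ α : Set E2, α ⊆ Metric.sphere (0 : E2) a ∧ α.Finite ∧ 1 ≤ α.ncard ∧
      α.ncard ≤ 2 ∧ v = cDistortion circleUniform α}) :
    1 + a ^ 2 - 4 * a / π ≤ v := by
  obtain ⟨α, hsub, hfin, h1, h2, hveq⟩ := hv
  have hcase : α.ncard = 1 ∨ α.ncard = 2 := by omega
  rcases hcase with h | h
  · obtain ⟨p, rfl⟩ := Set.ncard_eq_one.mp h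
    obtain ⟨φ, rfl⟩ := aux_polar a ha p (hsub (Set.mem_singleton p))
    rw [hveq, ← Set.pair_eq_singleton, aux_distortion_pair a ha φ φ]
    exact aux_bound_step a ((φ - φ)/2) ha
  · obtain ⟨p, q, hpq, rfl⟩ := Set.ncard_eq_two.mp h
    obtain ⟨φ, rfl⟩ := aux_polar a ha p (hsub (by simp))
    obtain ⟨ψ, rfl⟩ := aux_polar a ha q (hsub (by simp))
    rw [hveq, aux_distortion_pair a ha φ ψ]
    exact aux_bound_step a ((φ - ψ)/2) ha

theorem aux_pair_card (p q : E2) :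
    1 ≤ ({p, q} : Set E2).ncard ∧ ({p, q} : Set E2).ncard ≤ 2 := by
  constructor
  · have hne : ({p, q} : Set E2).Nonempty := ⟨p, by simp⟩
    have := (Set.ncard_pos (Set.toFinite _)).mpr hne
    omega
  · calc ({p, q} : Set E2).ncard ≤ ({q} : Set E2).ncard + 1 := Set.ncard_insert_le p {q}
    _ ≤ 2 := by rw [Set.ncard_singleton]

/-- For the uniform distribution on the unit circle with constraint the concentric circle of
radius `a > 0`: for every `θ ∈ [0, 2π]` the antipodal pair
`{(a cos θ, a sin θ), (-a cos θ, -a sin θ)}` is an optimal set of two points, and the second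
constrained quantization error is `V₂ = 1 + a² - 4a/π`. -/
theorem circle_constraint_optimal_two_points (a : ℝ) (ha : 0 < a) :
    (∀ θ ∈ Icc (0 : ℝ) (2 * π),
      IsOptimalNSet circleUniform (Metric.sphere (0 : E2) a) 2
        {cpt (a * Real.cos θ) (a * Real.sin θ),
          cpt (-(a * Real.cos θ)) (-(a * Real.sin θ))}) ∧
    cqError circleUniform (Metric.sphere (0 : E2) a) 2 = 1 + a ^ 2 - 4 * a / π := by
  have hneg : ∀ θ : ℝ, cpt (-(a * Real.cos θ)) (-(a * Real.sin θ))
      = cpt (a * Real.cos (θ + π)) (a * Real.sin (θ + π)) := by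
    intro θ
    rw [Real.cos_add, Real.sin_add, Real.cos_pi, Real.sin_pi]
    ring_nf
  have hsub : ∀ θ : ℝ, ({cpt (a * Real.cos θ) (a * Real.sin θ),
      cpt (-(a * Real.cos θ)) (-(a * Real.sin θ))} : Set E2) ⊆ Metric.sphere (0 : E2) a := by
    intro θ x hx
    rcases hx with rfl | rfl
    · exact aux_mem_sphere a ha θ
    · rw [hneg θ]; exact aux_mem_sphere a ha (θ + π)
  have hdist : ∀ θ : ℝ, cDistortion circleUniform
      {cpt (a * Real.cos θ) (a * Real.sin θ), cpt (-(a * Real.cos θ)) (-(a * Real.sin θ))}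
      = 1 + a ^ 2 - 4 * a / π := by
    intro θ
    rw [hneg θ, aux_distortion_pair a ha θ (θ + π)]
    rw [show (θ - (θ + π))/2 = -(π/2) by ring, Real.sin_neg, Real.sin_pi_div_two]
    norm_num
  have hmem : (1 + a ^ 2 - 4 * a / π) ∈ {v : ℝ | ∃ α : Set E2,
      α ⊆ Metric.sphere (0 : E2) a ∧ α.Finite ∧ 1 ≤ α.ncard ∧ α.ncard ≤ 2 ∧
      v = cDistortion circleUniform α} := by
    exact ⟨{cpt (a * Real.cos 0) (a * Real.sin 0),
      cpt (-(a * Real.cos 0)) (-(a * Real.sin 0))}, hsub 0, Set.toFinite _,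
      (aux_pair_card _ _).1, (aux_pair_card _ _).2, (hdist 0).symm⟩
  have hcq : cqError circleUniform (Metric.sphere (0 : E2) a) 2 = 1 + a ^ 2 - 4 * a / π := by
    unfold cqError
    apply le_antisymm
    · exact csInf_le ⟨1 + a ^ 2 - 4 * a / π, fun v hv => aux_lower_bound a ha v hv⟩ hmem
    · exact le_csInf ⟨_, hmem⟩ (fun v hv => aux_lower_bound a ha v hv)
  refine ⟨fun θ _ => ⟨hsub θ, Set.toFinite _, (aux_pair_card _ _).1, (aux_pair_card _ _).2, ?_⟩,
    hcq⟩
  rw [hdist θ, hcq]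
end
end

section
/- Let P be the uniform probability measure on the horizontal diameter {(x,0) : −1 ≤ x ≤ 1} of the unit circle in ℝ², and let the constraint be the unit circle. Then for every n ≥ 2, the nth constrained quantization error equals 1/3; in particular, the two-point set {(−1,0),(1,0)} remains an optimal set of n points for every n ≥ 2, so an optimal set of n points need not contain exactly n elements even though the support of P is infinite. -/
open MeasureTheory Real Set

noncomputable section

lemma sq_dist (x y : ℝ) (a : E2) : dist (cpt x y) a ^ 2 = (x - a 0)^2 + (y - a 1)^2 := by
  rw [EuclideanSpace.dist_eq, Real.sq_sqrt (by positivity)]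
  simp [cpt, Fin.sum_univ_two, Real.dist_eq, sq_abs]

lemma cont_cpt : Continuous (fun x : ℝ => cpt x 0) := by
  refine (PiLp.continuous_toLp 2 _).comp ?_
  apply continuous_pi
  intro i
  fin_cases i <;> simp [cpt] <;> continuity

lemma sphere_coord {a : E2} (ha : a ∈ Metric.sphere (0:E2) 1) : (a 0)^2 + (a 1)^2 = 1 := by
  rw [mem_sphere_zero_iff_norm, EuclideanSpace.norm_eq] at ha
  have h := congrArg (· ^ 2) ha
  simp only [Real.sq_sqrt (by positivity : (0:ℝ) ≤ ∑ i, ‖a i‖^2)] at h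
  simpa [Fin.sum_univ_two, sq_abs] using h

lemma cpt_mem_sphere (x y : ℝ) (h : x^2 + y^2 = 1) : cpt x y ∈ Metric.sphere (0:E2) 1 := by
  rw [mem_sphere_zero_iff_norm, EuclideanSpace.norm_eq]
  simp [cpt, Fin.sum_univ_two, sq_abs]
  exact h

lemma iInf_pair_set {p q : E2} (f : E2 → ℝ) (hf : ∀ a, 0 ≤ f a) :
    (⨅ a : ({p, q} : Set E2), f a) = min (f p) (f q) := by
  have hbdd : BddBelow (Set.range fun a : ({p, q} : Set E2) => f a) :=
    ⟨0, by rintro v ⟨a, rfl⟩; exact hf _⟩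
  apply le_antisymm
  · exact le_min (ciInf_le hbdd ⟨p, by simp⟩) (ciInf_le hbdd ⟨q, by simp⟩)
  · apply le_ciInf
    rintro ⟨a, ha⟩
    rcases ha with rfl | rfl
    · exact min_le_left _ _
    · exact min_le_right _ _

lemma pointwise_lb {α : Set E2} (hα : α ⊆ Metric.sphere (0:E2) 1) (hne : α.Nonempty) (x : ℝ) :
    (1 - |x|)^2 ≤ ⨅ a : α, dist (cpt x 0) a ^ 2 := by
  haveI : Nonempty α := hne.to_subtype
  apply le_ciInf
  rintro ⟨a, ha⟩
  have h1 : (a 0)^2 + (a 1)^2 = 1 := sphere_coord (hα ha)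
  rw [sq_dist]
  have hA : |a 0| ≤ 1 := by nlinarith [sq_abs (a 0), abs_nonneg (a 0), sq_nonneg (a 1)]
  have hx : x * a 0 ≤ |x| := by
    calc x * a 0 ≤ |x * a 0| := le_abs_self _
    _ = |x| * |a 0| := abs_mul _ _
    _ ≤ |x| * 1 := by gcongr
    _ = |x| := mul_one _
  nlinarith [sq_abs x]

lemma pointwise_ub {a : E2} (ha : a ∈ Metric.sphere (0:E2) 1) {x : ℝ} (hx : x ∈ Icc (-1:ℝ) 1) :
    dist (cpt x 0) a ^ 2 ≤ 4 := by
  have h1 : (a 0)^2 + (a 1)^2 = 1 := sphere_coord ha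
  rw [sq_dist]
  have hA : |a 0| ≤ 1 := by nlinarith [sq_abs (a 0), abs_nonneg (a 0), sq_nonneg (a 1)]
  obtain ⟨hl, hr⟩ := hx
  nlinarith [abs_nonneg (a 0), le_abs_self (a 0), neg_abs_le (a 0)]

lemma min_pair (x : ℝ) : min ((x+1)^2) ((x-1)^2) = (1 - |x|)^2 := by
  rcases le_or_gt 0 x with h | h
  · rw [abs_of_nonneg h, min_eq_right (by nlinarith)]; ring
  · rw [abs_of_neg h, min_eq_left (by nlinarith)]; ring

lemma integral_uniform (f : ℝ → ℝ) :
    ∫ x, f x ∂(uniformIccM (-1) 1) = (2⁻¹ : ℝ) * ∫ x in (-1:ℝ)..1, f x := by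
  rw [uniformIccM, integral_smul_measure,
    MeasureTheory.integral_Icc_eq_integral_Ioc,
    ← intervalIntegral.integral_of_le (by norm_num : (-1:ℝ) ≤ 1)]
  norm_num [ENNReal.toReal_inv]

lemma key_integral_s13 : ∫ x in (-1:ℝ)..1, (1 - |x|)^2 = 2/3 := by
  have hcont : Continuous fun x : ℝ => (1 - |x|)^2 := by continuity
  have h1 : ∫ x in (-1:ℝ)..0, (1 - |x|)^2 = 1/3 := by
    have hd : ∀ x ∈ Set.uIcc (-1:ℝ) 0, HasDerivAt (fun x : ℝ => (1+x)^3/3) ((1+x)^2) x := by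
      intro x _
      have := (((hasDerivAt_id x).const_add 1).pow 3).div_const 3
      refine this.congr_deriv ?_
      simp only [id_eq, Nat.cast_ofNat]
      ring
    rw [intervalIntegral.integral_congr (g := fun x : ℝ => (1+x)^2)
      (fun x hx => by
        rw [Set.uIcc_of_le (by norm_num : (-1:ℝ) ≤ 0)] at hx
        simp only []
        rw [abs_of_nonpos hx.2]; ring),
      intervalIntegral.integral_eq_sub_of_hasDerivAt hd
        ((by continuity : Continuous fun x : ℝ => (1+x)^2).intervalIntegrable _ _)]
    norm_num
  have h2 : ∫ x in (0:ℝ)..1, (1 - |x|)^2 = 1/3 := by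
    have hd : ∀ x ∈ Set.uIcc (0:ℝ) 1, HasDerivAt (fun x : ℝ => -((1-x)^3/3)) ((1-x)^2) x := by
      intro x _
      have := ((((hasDerivAt_id x).const_sub 1).pow 3).div_const 3).neg
      refine this.congr_deriv ?_
      simp only [id_eq, Nat.cast_ofNat]
      ring
    rw [intervalIntegral.integral_congr (g := fun x : ℝ => (1-x)^2)
      (fun x hx => by
        rw [Set.uIcc_of_le (by norm_num : (0:ℝ) ≤ 1)] at hx
        simp only []
        rw [abs_of_nonneg hx.1]),
      intervalIntegral.integral_eq_sub_of_hasDerivAt hd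
        ((by continuity : Continuous fun x : ℝ => (1-x)^2).intervalIntegrable _ _)]
    norm_num
  rw [← intervalIntegral.integral_add_adjacent_intervals
    (hcont.intervalIntegrable (-1) 0) (hcont.intervalIntegrable 0 1), h1, h2]
  norm_num

lemma meas_g (α : Set E2) (hfin : α.Finite) (hne : α.Nonempty) :
    Measurable (fun y : E2 => ⨅ a : α, dist y (a : E2) ^ 2) := by
  haveI : Countable α := hfin.countable.to_subtype
  exact Measurable.iInf fun a => (measurable_id.dist measurable_const).pow_const 2

lemma distortion_eq_s13 (α : Set E2) (hfin : α.Finite) (hne : α.Nonempty) :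
    cDistortion (Measure.map (fun x : ℝ => cpt x 0) (uniformIccM (-1) 1)) α
      = ∫ x, (⨅ a : α, dist (cpt x 0) (a : E2) ^ 2) ∂(uniformIccM (-1) 1) := by
  unfold cDistortion
  rw [MeasureTheory.integral_map cont_cpt.aemeasurable
    (meas_g α hfin hne).aestronglyMeasurable]

lemma f_nonneg (α : Set E2) (hne : α.Nonempty) (x : ℝ) :
    0 ≤ ⨅ a : α, dist (cpt x 0) (a : E2) ^ 2 := by
  haveI : Nonempty α := hne.to_subtype
  exact le_ciInf fun a => sq_nonneg _

lemma integrable_f (α : Set E2) (hα : α ⊆ Metric.sphere (0:E2) 1) (hfin : α.Finite)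
    (hne : α.Nonempty) :
    Integrable (fun x : ℝ => ⨅ a : α, dist (cpt x 0) (a : E2) ^ 2) (uniformIccM (-1) 1) := by
  haveI : Nonempty α := hne.to_subtype
  have hne' := hne
  obtain ⟨a₀, ha₀⟩ := hne'
  rw [uniformIccM]
  refine Integrable.smul_measure ?_ (ENNReal.inv_ne_top.mpr (by norm_num))
  refine Integrable.mono' (integrable_const 4)
    ((meas_g α hfin hne).comp cont_cpt.measurable).aestronglyMeasurable ?_
  rw [ae_restrict_iff' measurableSet_Icc]
  refine ae_of_all _ fun x hx => ?_
  rw [Real.norm_eq_abs, abs_of_nonneg (f_nonneg α hne x)]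
  have hbdd : BddBelow (Set.range fun a : α => dist (cpt x 0) (a : E2) ^ 2) :=
    ⟨0, by rintro v ⟨a, rfl⟩; exact sq_nonneg _⟩
  have hle : (⨅ a : α, dist (cpt x 0) (a : E2) ^ 2) ≤ dist (cpt x 0) a₀ ^ 2 :=
    ciInf_le hbdd ⟨a₀, ha₀⟩
  exact hle.trans (pointwise_ub (hα ha₀) hx)

lemma distortion_lb (α : Set E2) (hα : α ⊆ Metric.sphere (0:E2) 1) (hfin : α.Finite)
    (hne : α.Nonempty) :
    (1/3 : ℝ) ≤ ∫ x, (⨅ a : α, dist (cpt x 0) (a : E2) ^ 2) ∂(uniformIccM (-1) 1) := by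
  have h13 : ∫ x, (1 - |x|)^2 ∂(uniformIccM (-1) 1) = 1/3 := by
    rw [integral_uniform, key_integral_s13]; norm_num
  rw [← h13]
  exact integral_mono_of_nonneg (ae_of_all _ fun x => sq_nonneg _)
    (integrable_f α hα hfin hne) (ae_of_all _ fun x => pointwise_lb hα hne x)

lemma cpt_ne : cpt (-1) 0 ≠ cpt 1 0 := by
  intro h
  have h0 : ((-1 : ℝ)) = 1 := by
    have := congrArg (fun v : E2 => v 0) h
    simpa [cpt] using this
  norm_num at h0

lemma distortion_pair_eval :
    ∫ x, (⨅ a : ({cpt (-1) 0, cpt 1 0} : Set E2), dist (cpt x 0) (a : E2) ^ 2)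
      ∂(uniformIccM (-1) 1) = 1/3 := by
  have hpt : ∀ x : ℝ, (⨅ a : ({cpt (-1) 0, cpt 1 0} : Set E2), dist (cpt x 0) (a : E2) ^ 2)
      = (1 - |x|)^2 := by
    intro x
    rw [iInf_pair_set _ (fun a => sq_nonneg _), sq_dist, sq_dist]
    have e1 : (cpt (-1) 0 : E2) 0 = -1 := by simp [cpt]
    have e2 : (cpt (-1) 0 : E2) 1 = 0 := by simp [cpt]
    have e3 : (cpt 1 0 : E2) 0 = 1 := by simp [cpt]
    have e4 : (cpt 1 0 : E2) 1 = 0 := by simp [cpt]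
    rw [e1, e2, e3, e4, ← min_pair x]
    ring_nf
  simp_rw [hpt]
  rw [integral_uniform, key_integral_s13]
  norm_num

/-- For the uniform distribution on the horizontal diameter `{(x,0) : -1 ≤ x ≤ 1}` of the unit
circle, with constraint the unit circle: for every `n ≥ 2` the `n`th constrained quantization
error equals `1/3`, and the two-point set `{(-1,0), (1,0)}` remains an optimal set of `n` points;
in particular an optimal set of `n` points need not contain exactly `n` elements even though the
support of `P` is infinite. -/
theorem diameter_circle_constraint_n_points (n : ℕ) (hn : 2 ≤ n) :
    cqError (Measure.map (fun x : ℝ => cpt x 0) (uniformIccM (-1) 1))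
      (Metric.sphere (0 : E2) 1) n = 1 / 3 ∧
    IsOptimalNSet (Measure.map (fun x : ℝ => cpt x 0) (uniformIccM (-1) 1))
      (Metric.sphere (0 : E2) 1) n {cpt (-1) 0, cpt 1 0} := by
  have hpair_sub : ({cpt (-1) 0, cpt 1 0} : Set E2) ⊆ Metric.sphere (0:E2) 1 := by
    rintro a (rfl | rfl)
    · exact cpt_mem_sphere (-1) 0 (by norm_num)
    · exact cpt_mem_sphere 1 0 (by norm_num)
  have hpair_fin : ({cpt (-1) 0, cpt 1 0} : Set E2).Finite := (Set.finite_singleton _).insert _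
  have hpair_ncard : ({cpt (-1) 0, cpt 1 0} : Set E2).ncard = 2 := Set.ncard_pair cpt_ne
  have hpair_ne : ({cpt (-1) 0, cpt 1 0} : Set E2).Nonempty := ⟨_, Set.mem_insert _ _⟩
  have hD : cDistortion (Measure.map (fun x : ℝ => cpt x 0) (uniformIccM (-1) 1))
      ({cpt (-1) 0, cpt 1 0} : Set E2) = 1/3 := by
    rw [distortion_eq_s13 _ hpair_fin hpair_ne, distortion_pair_eval]
  have hlb : ∀ v ∈ {v : ℝ | ∃ α : Set E2, α ⊆ Metric.sphere (0:E2) 1 ∧ α.Finite ∧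
      1 ≤ α.ncard ∧ α.ncard ≤ n ∧
      v = cDistortion (Measure.map (fun x : ℝ => cpt x 0) (uniformIccM (-1) 1)) α},
      (1/3 : ℝ) ≤ v := by
    rintro v ⟨α, hsub, hfin, h1, h2, rfl⟩
    have hne : α.Nonempty := Set.nonempty_of_ncard_ne_zero (by omega)
    rw [distortion_eq_s13 _ hfin hne]
    exact distortion_lb α hsub hfin hne
  have hmem : (1/3 : ℝ) ∈ {v : ℝ | ∃ α : Set E2, α ⊆ Metric.sphere (0:E2) 1 ∧ α.Finite ∧
      1 ≤ α.ncard ∧ α.ncard ≤ n ∧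
      v = cDistortion (Measure.map (fun x : ℝ => cpt x 0) (uniformIccM (-1) 1)) α} :=
    ⟨{cpt (-1) 0, cpt 1 0}, hpair_sub, hpair_fin, by omega, by omega, hD.symm⟩
  have hcq : cqError (Measure.map (fun x : ℝ => cpt x 0) (uniformIccM (-1) 1))
      (Metric.sphere (0 : E2) 1) n = 1/3 := by
    unfold cqError
    exact le_antisymm (csInf_le ⟨1/3, fun v hv => hlb v hv⟩ hmem) (le_csInf ⟨_, hmem⟩ hlb)
  exact ⟨hcq, hpair_sub, hpair_fin, by omega, by omega, hD.trans hcq.symm⟩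
end
end

section
/- Let P be the uniform probability measure on the chord {(x,−1/2) : −√3/2 ≤ x ≤ √3/2} of the unit circle in ℝ², and let the constraint be the unit circle. Then for every θ, the distortion error of P with respect to {(cos θ, sin θ)} equals sin θ + 3/2; consequently {(0,−1)} is the optimal set of one point, and the first constrained quantization error is V_1 = 1/2. -/
open MeasureTheory Real Set

noncomputable section

local notation "Pm" => Measure.map (fun x : ℝ => cpt x (-(1/2)))
  (uniformIccM (-(Real.sqrt 3 / 2)) (Real.sqrt 3 / 2))

lemma hf_meas : Measurable (fun x : ℝ => cpt x (-(1/2))) := by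
  unfold cpt
  refine (PiLp.continuous_toLp 2 _).measurable.comp (measurable_pi_iff.mpr ?_)
  intro i
  fin_cases i <;> simp <;> measurability

lemma key (a : E2) :
    cDistortion Pm {a} = 1/4 + (a 0)^2 + (a 1 + 1/2)^2 := by
  have hs : Real.sqrt 3 > 0 := by positivity
  have hs2 : Real.sqrt 3 ^ 2 = 3 := Real.sq_sqrt (by norm_num)
  unfold cDistortion
  have h1 : ∀ x : E2, (⨅ b : ({a} : Set E2), dist x (b : E2) ^ 2) = dist x a ^ 2 := by
    intro x
    exact ciInf_unique
  simp only [h1]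
  rw [integral_map hf_meas.aemeasurable
    (by exact ((continuous_id.dist continuous_const).pow 2).aestronglyMeasurable)]
  have hd : ∀ t : ℝ, dist (cpt t (-(1/2))) a ^ 2 = (t - a 0)^2 + (-(1/2) - a 1)^2 := by
    intro t
    rw [EuclideanSpace.dist_eq, Real.sq_sqrt (by positivity)]
    simp [Fin.sum_univ_two, cpt, Real.dist_eq, sq_abs]
  simp only [hd]
  unfold uniformIccM
  rw [integral_smul_measure]
  have h2 : (√3 / 2 - -(√3 / 2)) = √3 := by ring
  rw [h2, ENNReal.toReal_inv, ENNReal.toReal_ofReal (le_of_lt hs)]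
  rw [MeasureTheory.integral_Icc_eq_integral_Ioc,
    ← intervalIntegral.integral_of_le (by linarith)]
  have h3 : ∫ t in (-(√3/2))..(√3/2), ((t - a 0)^2 + (-(1/2) - a 1)^2)
      = (√3/2 - a 0)^3/3 - (-(√3/2) - a 0)^3/3 + √3 * (-(1/2) - a 1)^2 := by
    rw [intervalIntegral.integral_add
      ((by continuity : Continuous fun t : ℝ => (t - a 0)^2).intervalIntegrable _ _)
      (intervalIntegrable_const)]
    rw [intervalIntegral.integral_const]
    have := intervalIntegral.integral_comp_sub_right (a := -(√3/2)) (b := √3/2)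
      (fun t => t ^ 2) (a 0)
    rw [this, integral_pow]
    simp only [smul_eq_mul]
    push_cast
    ring
  rw [h3]
  have : (-(1/2) - a 1)^2 = (a 1 + 1/2)^2 := by ring
  simp only [smul_eq_mul]
  field_simp
  nlinarith [hs2, sq_nonneg (a 0), sq_nonneg (a 1)]

lemma sphere_val {a : E2} (ha : a ∈ Metric.sphere (0 : E2) 1) :
    cDistortion Pm {a} = a 1 + 3/2 ∧ -1 ≤ a 1 := by
  rw [mem_sphere_zero_iff_norm] at ha
  have hn : a 0 ^ 2 + a 1 ^ 2 = 1 := by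
    have hnn : (0:ℝ) ≤ ∑ i : Fin 2, ‖a i‖ ^ 2 := by positivity
    have h4 := Real.sq_sqrt hnn
    rw [EuclideanSpace.norm_eq] at ha
    rw [ha] at h4
    simpa [Fin.sum_univ_two, sq_abs] using h4.symm
  constructor
  · rw [key]; nlinarith
  · nlinarith [sq_nonneg (a 0), sq_nonneg (a 1 + 1)]

lemma pt_mem : cpt 0 (-1) ∈ Metric.sphere (0 : E2) 1 := by
  rw [mem_sphere_zero_iff_norm, EuclideanSpace.norm_eq]
  simp [Fin.sum_univ_two, cpt]

lemma hone : cDistortion Pm {cpt 0 (-1)} = 1/2 := by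
  rw [(sphere_val pt_mem).1]
  norm_num [cpt]

lemma cq_eq_s14 : cqError Pm (Metric.sphere (0 : E2) 1) 1 = 1 / 2 := by
  unfold cqError
  have hmem : (1/2 : ℝ) ∈ {v : ℝ | ∃ α : Set E2, α ⊆ Metric.sphere (0:E2) 1 ∧ α.Finite ∧
      1 ≤ α.ncard ∧ α.ncard ≤ 1 ∧ v = cDistortion Pm α} := by
    exact ⟨{cpt 0 (-1)}, by simpa using pt_mem, Set.finite_singleton _,
      by simp, by simp, hone.symm⟩
  have hlb : ∀ v ∈ {v : ℝ | ∃ α : Set E2, α ⊆ Metric.sphere (0:E2) 1 ∧ α.Finite ∧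
      1 ≤ α.ncard ∧ α.ncard ≤ 1 ∧ v = cDistortion Pm α}, (1/2:ℝ) ≤ v := by
    rintro v ⟨α, hαS, hfin, h1, h2, rfl⟩
    have : α.ncard = 1 := le_antisymm h2 h1
    obtain ⟨a, rfl⟩ := Set.ncard_eq_one.mp this
    have ha := sphere_val (hαS rfl)
    rw [ha.1]; linarith [ha.2]
  exact le_antisymm (csInf_le ⟨1/2, hlb⟩ hmem) (le_csInf ⟨1/2, hmem⟩ hlb)

/-- For the uniform distribution on the chord `{(x, -1/2) : -√3/2 ≤ x ≤ √3/2}` of the unit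
circle, with constraint the unit circle: for every `θ` the distortion error of
`{(cos θ, sin θ)}` equals `sin θ + 3/2`; consequently `{(0, -1)}` is an optimal set of one
point, and the first constrained quantization error is `V₁ = 1/2`. -/
theorem chord_circle_constraint_one_point :
    (∀ θ : ℝ,
      cDistortion
        (Measure.map (fun x : ℝ => cpt x (-(1/2)))
          (uniformIccM (-(Real.sqrt 3 / 2)) (Real.sqrt 3 / 2)))
        {cpt (Real.cos θ) (Real.sin θ)} = Real.sin θ + 3 / 2) ∧
    IsOptimalNSet
      (Measure.map (fun x : ℝ => cpt x (-(1/2)))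
        (uniformIccM (-(Real.sqrt 3 / 2)) (Real.sqrt 3 / 2)))
      (Metric.sphere (0 : E2) 1) 1 {cpt 0 (-1)} ∧
    cqError
      (Measure.map (fun x : ℝ => cpt x (-(1/2)))
        (uniformIccM (-(Real.sqrt 3 / 2)) (Real.sqrt 3 / 2)))
      (Metric.sphere (0 : E2) 1) 1 = 1 / 2 := by
  refine ⟨?_, ⟨by simpa using pt_mem, Set.finite_singleton _, by simp, by simp,
    hone.trans cq_eq_s14.symm⟩, cq_eq_s14⟩
  intro θ
  rw [key]
  simp only [cpt, Matrix.cons_val_zero, Matrix.cons_val_one, Matrix.head_cons]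
  nlinarith [Real.sin_sq_add_cos_sq θ]
end
end
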